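/- Let $\Theta\subseteq\mathbb{R}^d$ be convex, let $\theta^\star\in\Theta$, and let $M:\Theta\to\Theta$ be a map. Suppose: (i) for each $\theta$, $Q(\cdot\mid\theta):\Theta\to\mathbb{R}$ is differentiable, $Q(\cdot\mid\theta^\star)$ is $\lambda$-strongly convex on a ball $B=\{\theta:\|\theta-\theta^\star\|\le r\}$; (ii) first-order optimality holds: $\langle\nabla_1 Q(\theta^\star\mid\theta^\star),\,\theta-\theta^\star\rangle\ge 0$ and $\langle\nabla_1 Q(M(\theta)\mid\theta),\,\theta'-M(\theta)\rangle\ge 0$ for all $\theta,\theta'\in\Theta$; (iii) first-order stability holds: $\|\nabla_1 Q(M(\theta)\mid\theta^\star)-\nabla_1 Q(M(\theta)\mid\theta)\| \le \gamma\|\theta-\theta^\star\|$ for all $\theta\in B$, where $0<\gamma<\lambda$. Then $\|M(\theta)-\theta^\star\| \le (\gamma/\lambda)\|\theta-\theta^\star\|$ for all $\theta\in B$ with $M(\theta)\in B$. -/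
import Mathlib


open RealInnerProductSpace

/-- Contractivity of the population DM operator (Theorem 1). Under
strong convexity of `Q(·|θ⋆)` on the ball, first-order optimality of the updates, and
first-order stability with constant `γ < λ`, the DM map `M` is `(γ/λ)`-contractive
towards `θ⋆` on the ball. Here `g1 η θ` is the gradient of `Q(·|θ)` at `η`. -/
theorem stmt6 {E : Type*} [NormedAddCommGroup E] [InnerProductSpace ℝ E] [CompleteSpace E]
    (Θ : Set E) (hΘ : Convex ℝ Θ) (θstar : E) (hθstar : θstar ∈ Θ)
    (M : E → E) (hM : ∀ θ ∈ Θ, M θ ∈ Θ)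
    (Q : E → E → ℝ) (g1 : E → E → E) (r lam gam : ℝ) (hr : 0 < r)
    (hball : ∀ θ : E, ‖θ - θstar‖ ≤ r → θ ∈ Θ)
    (hgrad : ∀ θ η : E, HasGradientAt (fun x => Q x θ) (g1 η θ) η)
    (hsc : ∀ θ1 : E, ‖θ1 - θstar‖ ≤ r → ∀ θ2 : E, ‖θ2 - θstar‖ ≤ r →
      lam / 2 * ‖θ1 - θ2‖ ^ 2 ≤ Q θ1 θstar - Q θ2 θstar - ⟪g1 θ2 θstar, θ1 - θ2⟫)
    (hopt1 : ∀ θ ∈ Θ, 0 ≤ ⟪g1 θstar θstar, θ - θstar⟫)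
    (hopt2 : ∀ θ ∈ Θ, ∀ θ' ∈ Θ, 0 ≤ ⟪g1 (M θ) θ, θ' - M θ⟫)
    (hfos : ∀ θ : E, ‖θ - θstar‖ ≤ r →
      ‖g1 (M θ) θstar - g1 (M θ) θ‖ ≤ gam * ‖θ - θstar‖)
    (hgam : 0 < gam) (hgl : gam < lam) :
    ∀ θ : E, ‖θ - θstar‖ ≤ r → ‖M θ - θstar‖ ≤ r →
      ‖M θ - θstar‖ ≤ gam / lam * ‖θ - θstar‖ := by
  intro θ hθ hMθ
  have hθΘ : θ ∈ Θ := hball θ hθ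
  have hMθΘ : M θ ∈ Θ := hM θ hθΘ
  have hstar : ‖θstar - θstar‖ ≤ r := by simp [le_of_lt hr]
  have h1 := hsc (M θ) hMθ θstar hstar
  have h2 := hsc θstar hstar (M θ) hMθ
  have hnorm : ‖θstar - M θ‖ = ‖M θ - θstar‖ := by rw [norm_sub_rev]
  have hsum : lam * ‖M θ - θstar‖ ^ 2 ≤
      ⟪g1 (M θ) θstar, M θ - θstar⟫ - ⟪g1 θstar θstar, M θ - θstar⟫ := by
    have h2' : lam / 2 * ‖M θ - θstar‖ ^ 2 ≤
        Q θstar θstar - Q (M θ) θstar - ⟪g1 (M θ) θstar, θstar - M θ⟫ := by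
      rwa [hnorm] at h2
    have e : ⟪g1 (M θ) θstar, θstar - M θ⟫ = -⟪g1 (M θ) θstar, M θ - θstar⟫ := by
      rw [← inner_neg_right, neg_sub]
    nlinarith [h1, h2']
  have hA : 0 ≤ ⟪g1 θstar θstar, M θ - θstar⟫ := hopt1 (M θ) hMθΘ
  have hB : 0 ≤ ⟪g1 (M θ) θ, θstar - M θ⟫ := hopt2 θ hθΘ θstar hθstar
  have hB' : ⟪g1 (M θ) θ, M θ - θstar⟫ ≤ 0 := by
    have : ⟪g1 (M θ) θ, θstar - M θ⟫ = -⟪g1 (M θ) θ, M θ - θstar⟫ := by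
      rw [← inner_neg_right, neg_sub]
    linarith [hB, this ▸ hB]
  have hkey : lam * ‖M θ - θstar‖ ^ 2 ≤
      ⟪g1 (M θ) θstar - g1 (M θ) θ, M θ - θstar⟫ := by
    rw [inner_sub_left]; linarith
  have hcs : ⟪g1 (M θ) θstar - g1 (M θ) θ, M θ - θstar⟫ ≤
      gam * ‖θ - θstar‖ * ‖M θ - θstar‖ := by
    calc ⟪g1 (M θ) θstar - g1 (M θ) θ, M θ - θstar⟫
        ≤ ‖g1 (M θ) θstar - g1 (M θ) θ‖ * ‖M θ - θstar‖ := real_inner_le_norm _ _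
      _ ≤ gam * ‖θ - θstar‖ * ‖M θ - θstar‖ := by
          have := hfos θ hθ
          exact mul_le_mul_of_nonneg_right this (norm_nonneg _)
  have hlam : 0 < lam := lt_trans hgam hgl
  rcases eq_or_lt_of_le (norm_nonneg (M θ - θstar)) with h0 | h0
  · rw [← h0]
    positivity
  · have : lam * ‖M θ - θstar‖ ≤ gam * ‖θ - θstar‖ := by
      have := le_trans hkey hcs
      nlinarith
    rw [div_mul_eq_mul_div, le_div_iff₀ hlam]
    linarith [this]
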